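/- There exist infinitely many positive odd integers n such that (n²+1)/2 has two positive divisors d₁, d₂ with d₁ + d₂ = 2n; moreover any such divisors satisfy gcd(d₁, d₂) = 1 and d₁·d₂ = (n²+1)/2. -/

import Mathlib

/-- Pell sequence for `x² - 2y² = 1`. -/
private def pellSeq : ℕ → ℤ × ℤ
  | 0 => (1, 0)
  | k + 1 => (3 * (pellSeq k).1 + 4 * (pellSeq k).2, 2 * (pellSeq k).1 + 3 * (pellSeq k).2)

private lemma pellSeq_inv (k : ℕ) :
    1 ≤ (pellSeq k).1 ∧ 0 ≤ (pellSeq k).2 ∧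
      (pellSeq k).1 ^ 2 - 2 * (pellSeq k).2 ^ 2 = 1 := by
  induction k with
  | zero => simp [pellSeq]
  | succ k ih =>
    obtain ⟨h1, h2, h3⟩ := ih
    refine ⟨?_, ?_, ?_⟩
    · show 1 ≤ 3 * (pellSeq k).1 + 4 * (pellSeq k).2
      linarith
    · show 0 ≤ 2 * (pellSeq k).1 + 3 * (pellSeq k).2
      linarith
    · show (3 * (pellSeq k).1 + 4 * (pellSeq k).2) ^ 2 -
        2 * (2 * (pellSeq k).1 + 3 * (pellSeq k).2) ^ 2 = 1
      linear_combination h3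

private lemma pellSeq_strictMono : StrictMono (fun k => (pellSeq k).1) := by
  apply strictMono_nat_of_lt_succ
  intro k
  obtain ⟨h1, h2, _⟩ := pellSeq_inv k
  show (pellSeq k).1 < 3 * (pellSeq k).1 + 4 * (pellSeq k).2
  linarith

/-- Vieta descent (ordered version): if `(a+b)² + 4 = 8·t·a·b` with `0 < a ≤ b`, `0 < t`,
then `t = 1`. -/
private lemma descendAux : ∀ s : ℕ, ∀ a b t : ℤ, 0 < a → a ≤ b → 0 < t →
    a + b ≤ (s : ℤ) → (a + b) ^ 2 + 4 = 8 * t * (a * b) → t = 1 := by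
  intro s
  induction s using Nat.strong_induction_on with
  | _ s IH =>
    intro a b t ha hab ht hs heq
    have hb : 0 < b := lt_of_lt_of_le ha hab
    by_contra hne
    have ht2 : 2 ≤ t := by omega
    rcases eq_or_lt_of_le hab with rfl | hlt
    · nlinarith [sq_nonneg a]
    · -- a < b; b divides a² + 4
      have hbdvd : b ∣ a ^ 2 + 4 := ⟨8 * t * a - 2 * a - b, by linear_combination heq⟩
      obtain ⟨c, hc⟩ := hbdvd
      have hcpos : 0 < c := by
        by_contra h
        push_neg at h
        nlinarith
      have hcval : c = 8 * t * a - 2 * a - b := by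
        have hb0 : b ≠ 0 := ne_of_gt hb
        have h : b * c = b * (8 * t * a - 2 * a - b) := by linear_combination -hc + heq
        exact mul_left_cancel₀ hb0 h
      have heq2 : (a + c) ^ 2 + 4 = 8 * t * (a * c) := by
        subst hcval
        linear_combination heq
      have hclt : c < b := by
        by_contra hge
        push_neg at hge
        have hb2 : b * b ≤ b * c := by nlinarith
        have ha1 : a ≤ 1 := by nlinarith
        have ha1' : a = 1 := by omega
        have hble : b ≤ 2 := by nlinarith
        have hb2' : b = 2 := by omega
        rw [ha1', hb2'] at heq
        nlinarith
      -- apply induction hypothesis with smaller sum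
      have hsn : a + c ≤ ((s - 1 : ℕ) : ℤ) := by omega
      rcases le_total a c with h' | h'
      · exact hne (IH (s - 1) (by omega) a c t ha h' ht hsn heq2)
      · exact hne (IH (s - 1) (by omega) c a t hcpos h' ht (by linarith)
          (by linear_combination heq2))

private lemma descend (a b t : ℤ) (ha : 0 < a) (hb : 0 < b) (ht : 0 < t)
    (heq : (a + b) ^ 2 + 4 = 8 * t * (a * b)) : t = 1 := by
  rcases le_total a b with h | h
  · exact descendAux (a + b).toNat a b t ha h ht
      (le_of_eq (Int.toNat_of_nonneg (by linarith)).symm) heq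
  · exact descendAux (a + b).toNat b a t hb h ht
      (by rw [Int.toNat_of_nonneg (by linarith)]; linarith)
      (by linear_combination heq)

/-- There are infinitely many positive odd integers `n` such that `(n²+1)/2` has two positive
divisors `d₁, d₂` with `d₁ + d₂ = 2n`; moreover any such divisors satisfy `gcd(d₁,d₂) = 1`
and `d₁·d₂ = (n²+1)/2`. -/
theorem stmt2 :
    {n : ℤ | 0 < n ∧ Odd n ∧ ∃ d₁ d₂ : ℤ, 0 < d₁ ∧ 0 < d₂ ∧
      d₁ ∣ (n ^ 2 + 1) / 2 ∧ d₂ ∣ (n ^ 2 + 1) / 2 ∧ d₁ + d₂ = 2 * n}.Infinite ∧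
    ∀ n d₁ d₂ : ℤ, 0 < n → Odd n → 0 < d₁ → 0 < d₂ →
      d₁ ∣ (n ^ 2 + 1) / 2 → d₂ ∣ (n ^ 2 + 1) / 2 → d₁ + d₂ = 2 * n →
      Int.gcd d₁ d₂ = 1 ∧ d₁ * d₂ = (n ^ 2 + 1) / 2 := by
  constructor
  · -- infinitude via the Pell sequence
    apply Set.infinite_of_injective_forall_mem (f := fun k => (pellSeq k).1)
      pellSeq_strictMono.injective
    intro k
    obtain ⟨h1, h2, h3⟩ := pellSeq_inv k
    set n := (pellSeq k).1 with hn
    set m := (pellSeq k).2 with hm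
    have hdiv : (n ^ 2 + 1) / 2 = m ^ 2 + 1 := by
      rw [show n ^ 2 + 1 = 2 * (m ^ 2 + 1) by linear_combination h3]
      exact Int.mul_ediv_cancel_left _ two_ne_zero
    have hmn : m < n := by nlinarith
    refine ⟨by linarith, ?_, n - m, n + m, by linarith, by linarith, ?_, ?_, by ring⟩
    · -- Odd n
      rcases Int.even_or_odd n with he | ho
      · exfalso
        obtain ⟨r, hr⟩ := he
        rw [hr] at h3
        have h4 : 4 * r ^ 2 - 2 * m ^ 2 = 1 := by linear_combination h3
        have h5 : ∃ R M : ℤ, 4 * R - 2 * M = 1 := ⟨r ^ 2, m ^ 2, h4⟩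
        obtain ⟨R, M, hRM⟩ := h5
        omega
      · exact ho
    · rw [hdiv]; exact ⟨n + m, by linear_combination -h3⟩
    · rw [hdiv]; exact ⟨n - m, by linear_combination -h3⟩
  · -- any such divisors are coprime with product (n²+1)/2
    intro n d₁ d₂ hn hodd hd₁ hd₂ hdvd₁ hdvd₂ hsum
    obtain ⟨k, hk⟩ := hodd
    have hNval : (n ^ 2 + 1) / 2 = 2 * k ^ 2 + 2 * k + 1 := by
      rw [show n ^ 2 + 1 = 2 * (2 * k ^ 2 + 2 * k + 1) by rw [hk]; ring]
      exact Int.mul_ediv_cancel_left _ two_ne_zero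
    set N : ℤ := (n ^ 2 + 1) / 2 with hN
    have h2N : 2 * N = n ^ 2 + 1 := by rw [hNval, hk]; ring
    have hNpos : 0 < N := by nlinarith
    -- gcd divides 2
    have hgdvd1 : (Int.gcd d₁ d₂ : ℤ) ∣ 2 * n := by
      rw [← hsum]
      exact Int.dvd_add (Int.gcd_dvd_left d₁ d₂) (Int.gcd_dvd_right d₁ d₂)
    have hgN : (Int.gcd d₁ d₂ : ℤ) ∣ N := dvd_trans (Int.gcd_dvd_left d₁ d₂) hdvd₁
    have hg2 : (Int.gcd d₁ d₂ : ℤ) ∣ 2 := by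
      have hA : (Int.gcd d₁ d₂ : ℤ) ∣ 4 * N := hgN.mul_left 4
      have hB : (Int.gcd d₁ d₂ : ℤ) ∣ n * (2 * n) := hgdvd1.mul_left n
      have hsub := dvd_sub hA hB
      rwa [show 4 * N - n * (2 * n) = 2 by linear_combination 2 * h2N] at hsub
    have hgnat : Int.gcd d₁ d₂ ∣ 2 := by exact_mod_cast hg2
    have hgcd : Int.gcd d₁ d₂ = 1 := by
      rcases (Nat.dvd_prime Nat.prime_two).mp hgnat with h | h
      · exact h
      · exfalso
        rw [h] at hgN
        obtain ⟨c, hcc⟩ := hgN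
        rw [hNval] at hcc
        have h5 : ∃ K : ℤ, 2 * K + 2 * k + 1 = 2 * c := ⟨k ^ 2, hcc⟩
        obtain ⟨K, hK⟩ := h5
        omega
    refine ⟨hgcd, ?_⟩
    have hco : IsCoprime d₁ d₂ := Int.isCoprime_iff_gcd_eq_one.mpr hgcd
    have hmul : d₁ * d₂ ∣ N := hco.mul_dvd hdvd₁ hdvd₂
    obtain ⟨t, ht⟩ := hmul
    have htpos : 0 < t := by
      by_contra h
      push_neg at h
      have hle : d₁ * d₂ * t ≤ 0 :=
        mul_nonpos_of_nonneg_of_nonpos (le_of_lt (mul_pos hd₁ hd₂)) h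
      linarith
    have heq : (d₁ + d₂) ^ 2 + 4 = 8 * t * (d₁ * d₂) := by
      rw [hsum]
      linear_combination (-4 : ℤ) * h2N + 8 * ht
    have ht1 : t = 1 := descend d₁ d₂ t hd₁ hd₂ htpos heq
    rw [ht1, mul_one] at ht
    exact ht.symm
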